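/- arXiv:2007.13315 — 5 statements merged into one kernel-verified Lean document; each statement's English description precedes it below -/
import Mathlib

section
/- Let n ≥ 2 and m ≥ 1 be integers and let k be an integer with 0 ≤ k < n. There exists a constant C > 0, depending only on k, n and m, such that for every ℓ > 0, every real a with 0 < a ≤ ℓ, and every n-times continuously differentiable function H : [0, ℓ] → ℝ^m, one has a^{2k} ∫₀^ℓ ‖H^{(k)}(θ)‖² dθ ≤ C ( ∫₀^ℓ ‖H(θ)‖² dθ + a^{2n} ∫₀^ℓ ‖H^{(n)}(θ)‖² dθ ). -/
open MeasureTheory Set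

set_option maxHeartbeats 1000000

open MeasureTheory Set intervalIntegral

variable {E : Type*} [NormedAddCommGroup E] [NormedSpace ℝ E] [CompleteSpace E]

lemma uIcc_subset_Icc' {ℓ u v : ℝ} (hu : u ∈ Icc (0:ℝ) ℓ) (hv : v ∈ Icc (0:ℝ) ℓ) :
    uIcc u v ⊆ Icc 0 ℓ := by
  rw [uIcc]
  exact Icc_subset_Icc (le_min hu.1 hv.1) (max_le hu.2 hv.2)

lemma ftc_within {ℓ : ℝ} (hℓ : 0 < ℓ) {g : ℝ → E} (hg : ContDiffOn ℝ 1 g (Icc 0 ℓ))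
    {u v : ℝ} (hu : u ∈ Icc (0:ℝ) ℓ) (hv : v ∈ Icc (0:ℝ) ℓ) :
    ∫ t in u..v, derivWithin g (Icc 0 ℓ) t = g v - g u := by
  have hud := uniqueDiffOn_Icc hℓ
  have hcont : ContinuousOn (derivWithin g (Icc 0 ℓ)) (Icc 0 ℓ) :=
    hg.continuousOn_derivWithin hud le_rfl
  have key : ∀ u v : ℝ, u ∈ Icc (0:ℝ) ℓ → v ∈ Icc (0:ℝ) ℓ → u ≤ v →
      ∫ t in u..v, derivWithin g (Icc 0 ℓ) t = g v - g u := by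
    intro u v hu hv huv
    refine integral_eq_sub_of_hasDeriv_right_of_le huv
      (hg.continuousOn.mono (Icc_subset_Icc hu.1 hv.2)) (fun x hx => ?_) ?_
    · have hx0 : x ∈ Ioo (0:ℝ) ℓ := ⟨lt_of_le_of_lt hu.1 hx.1, lt_of_lt_of_le hx.2 hv.2⟩
      have hmem : Icc (0:ℝ) ℓ ∈ nhds x := Icc_mem_nhds hx0.1 hx0.2
      have hd : HasDerivWithinAt g (derivWithin g (Icc 0 ℓ) x) (Icc 0 ℓ) x :=
        (hg.differentiableOn one_ne_zero x (Ioo_subset_Icc_self hx0)).hasDerivWithinAt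
      exact (hd.hasDerivAt hmem).hasDerivWithinAt
    · exact (hcont.mono (uIcc_subset_Icc' hu hv)).intervalIntegrable
  rcases le_total u v with h | h
  · exact key u v hu hv h
  · rw [intervalIntegral.integral_symm, key v u hv hu h]; abel

lemma exists_small_point {c d : ℝ} (hcd : c < d) {f : ℝ → ℝ} (hf : ContinuousOn f (Icc c d)) :
    ∃ x ∈ Icc c d, f x * (d - c) ≤ ∫ t in c..d, f t := by
  obtain ⟨x, hx, hmin⟩ := (isCompact_Icc).exists_isMinOn (nonempty_Icc.2 hcd.le) hf
  refine ⟨x, hx, ?_⟩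
  have h1 : ∫ t in c..d, f x ≤ ∫ t in c..d, f t := by
    refine intervalIntegral.integral_mono_on hcd.le intervalIntegrable_const
      (hf.intervalIntegrable_of_Icc hcd.le) (fun t ht => isMinOn_iff.1 hmin t ht)
  simpa [mul_comm, intervalIntegral.integral_const, smul_eq_mul] using h1

lemma sq_integral_le {c d : ℝ} (hcd : c < d) {f : ℝ → ℝ} (hf : ContinuousOn f (Icc c d)) :
    (∫ t in c..d, f t) ^ 2 ≤ (d - c) * ∫ t in c..d, (f t) ^ 2 := by
  set I := ∫ t in c..d, f t with hI
  set lam := I / (d - c) with hlam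
  have hL : (0:ℝ) < d - c := by linarith
  have hfi : IntervalIntegrable f volume c d := hf.intervalIntegrable_of_Icc hcd.le
  have hfi2 : IntervalIntegrable (fun t => (f t) ^ 2) volume c d :=
    (hf.pow 2).intervalIntegrable_of_Icc hcd.le
  have h0 : (0:ℝ) ≤ ∫ t in c..d, (f t - lam) ^ 2 :=
    intervalIntegral.integral_nonneg hcd.le (fun t _ => sq_nonneg _)
  have hexp : ∫ t in c..d, (f t - lam) ^ 2
      = (∫ t in c..d, (f t) ^ 2) - 2 * lam * I + lam ^ 2 * (d - c) := by
    have : (fun t => (f t - lam) ^ 2) = fun t => (f t) ^ 2 - (2 * lam) * f t + lam ^ 2 := by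
      funext t; ring
    rw [this, intervalIntegral.integral_add (hfi2.sub (hfi.const_mul _)) intervalIntegrable_const,
      intervalIntegral.integral_sub hfi2 (hfi.const_mul _),
      intervalIntegral.integral_const_mul, intervalIntegral.integral_const]
    simp only [smul_eq_mul, ← hI]
    ring
  rw [hexp] at h0
  rw [hlam] at h0
  have e1 : 2 * (I / (d - c)) * I = 2 * (I ^ 2 / (d - c)) := by ring
  have e2 : (I / (d - c)) ^ 2 * (d - c) = I ^ 2 / (d - c) := by
    field_simp
  rw [e1, e2] at h0
  have h2 : I ^ 2 / (d - c) ≤ ∫ t in c..d, (f t) ^ 2 := by linarith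
  calc I ^ 2 = (I ^ 2 / (d - c)) * (d - c) := by field_simp
    _ ≤ (∫ t in c..d, (f t) ^ 2) * (d - c) := by
        exact mul_le_mul_of_nonneg_right h2 hL.le
    _ = (d - c) * ∫ t in c..d, (f t) ^ 2 := by ring

lemma contDiffOn_iter {s : Set ℝ} (hs : UniqueDiffOn ℝ s)
    {H : ℝ → E} {n : ℕ} (hH : ContDiffOn ℝ n H s) :
    ∀ j m : ℕ, j + m ≤ n → ContDiffOn ℝ m (iteratedDerivWithin j H s) s := by
  intro j
  induction j with
  | zero =>
    intro m hm
    simpa [iteratedDerivWithin_zero] using hH.of_le (by exact_mod_cast (by omega : m ≤ n))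
  | succ j ih =>
    intro m hm
    have h1 : ContDiffOn ℝ (m + 1) (iteratedDerivWithin j H s) s := by
      exact_mod_cast ih (m + 1) (by omega)
    have h2 : ContDiffOn ℝ m (derivWithin (iteratedDerivWithin j H s) s) s :=
      h1.derivWithin hs (by exact_mod_cast le_rfl)
    exact h2.congr (fun x hx => congrFun iteratedDerivWithin_succ x)

lemma local_estimate {ℓ : ℝ} (hℓ : 0 < ℓ) {g : ℝ → E} (hg : ContDiffOn ℝ 2 g (Icc 0 ℓ))
    {c d : ℝ} (hcd : c < d) (hsub : Icc c d ⊆ Icc 0 ℓ) :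
    ∫ s in c..d, ‖derivWithin g (Icc 0 ℓ) s‖ ^ 2 ≤
      648 * ((d - c)⁻¹ ^ 2 * (∫ s in c..d, ‖g s‖ ^ 2)
        + (d - c) ^ 2 * ∫ s in c..d, ‖derivWithin (derivWithin g (Icc 0 ℓ)) (Icc 0 ℓ) s‖ ^ 2) := by
  have hud := uniqueDiffOn_Icc hℓ
  set g1 := derivWithin g (Icc 0 ℓ) with hg1def
  set g2 := derivWithin g1 (Icc 0 ℓ) with hg2def
  set L := d - c with hLdef
  have hL : (0:ℝ) < L := by simp [hLdef]; linarith
  have hg1c : ContDiffOn ℝ 1 g1 (Icc 0 ℓ) := hg.derivWithin hud (by norm_num)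
  have hg1cont : ContinuousOn g1 (Icc 0 ℓ) := hg1c.continuousOn
  have hg2cont : ContinuousOn g2 (Icc 0 ℓ) := hg1c.continuousOn_derivWithin hud le_rfl
  have hgcont : ContinuousOn g (Icc 0 ℓ) := hg.continuousOn
  have hcmem : c ∈ Icc (0:ℝ) ℓ := hsub ⟨le_rfl, hcd.le⟩
  have hdmem : d ∈ Icc (0:ℝ) ℓ := hsub ⟨hcd.le, le_rfl⟩
  set I₀ := ∫ t in c..d, ‖g t‖ with hI₀def
  set I₂ := ∫ t in c..d, ‖g2 t‖ with hI₂def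
  have hI₀nn : 0 ≤ I₀ := intervalIntegral.integral_nonneg hcd.le (fun t _ => norm_nonneg _)
  have hI₂nn : 0 ≤ I₂ := intervalIntegral.integral_nonneg hcd.le (fun t _ => norm_nonneg _)
  -- choose x in the left third
  obtain ⟨x, hx, hxle⟩ := exists_small_point (c := c) (d := c + L / 3) (by linarith)
    ((hgcont.mono hsub).norm.mono (Icc_subset_Icc le_rfl (by simp [hLdef]; linarith)))
  obtain ⟨y, hy, hyle⟩ := exists_small_point (c := d - L / 3) (d := d) (by linarith)
    ((hgcont.mono hsub).norm.mono (Icc_subset_Icc (by simp [hLdef]; linarith) le_rfl))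
  have hxIcc : x ∈ Icc c d := ⟨hx.1, by have := hx.2; simp [hLdef] at this ⊢; linarith⟩
  have hyIcc : y ∈ Icc c d := ⟨by have := hy.1; simp [hLdef] at this ⊢; linarith, hy.2⟩
  have hxmem : x ∈ Icc (0:ℝ) ℓ := hsub hxIcc
  have hymem : y ∈ Icc (0:ℝ) ℓ := hsub hyIcc
  have hxy3 : L / 3 ≤ y - x := by
    have h1 := hx.2; have h2 := hy.1
    simp only [hLdef] at h1 h2 ⊢; linarith
  have hxylt : 0 < y - x := by linarith
  have hnormint : IntervalIntegrable (fun t => ‖g t‖) volume c d :=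
    ((hgcont.mono hsub).norm).intervalIntegrable_of_Icc hcd.le
  have hc3d : c + L / 3 ≤ d := by rw [hLdef]; linarith
  have hd3c : c ≤ d - L / 3 := by rw [hLdef]; linarith
  -- bounds on ‖g x‖, ‖g y‖
  have hgx : ‖g x‖ * (L / 3) ≤ I₀ := by
    have hsub0 : (∫ t in c..(c + L / 3), ‖g t‖) ≤ I₀ :=
      intervalIntegral.integral_mono_interval le_rfl (by linarith) hc3d
        (Filter.Eventually.of_forall (fun t => norm_nonneg _)) hnormint
    have e : c + L / 3 - c = L / 3 := by ring
    calc ‖g x‖ * (L / 3) = ‖g x‖ * (c + L / 3 - c) := by rw [e]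
      _ ≤ ∫ t in c..(c + L / 3), ‖g t‖ := hxle
      _ ≤ I₀ := hsub0
  have hgy : ‖g y‖ * (L / 3) ≤ I₀ := by
    have hsub0 : (∫ t in (d - L / 3)..d, ‖g t‖) ≤ I₀ :=
      intervalIntegral.integral_mono_interval hd3c (by linarith) le_rfl
        (Filter.Eventually.of_forall (fun t => norm_nonneg _)) hnormint
    have e : d - (d - L / 3) = L / 3 := by ring
    calc ‖g y‖ * (L / 3) = ‖g y‖ * (d - (d - L / 3)) := by rw [e]
      _ ≤ ∫ t in (d - L / 3)..d, ‖g t‖ := hyle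
      _ ≤ I₀ := hsub0
  -- the primitive of g2
  set P : ℝ → E := fun t => ∫ u in c..t, g2 u with hPdef
  have hg2int : IntegrableOn g2 (uIcc c d) volume := by
    rw [uIcc_of_le hcd.le]; exact (hg2cont.mono hsub).integrableOn_Icc
  have hPcont : ContinuousOn P (Icc c d) := by
    have := intervalIntegral.continuousOn_primitive_interval (a := c) (b := d) (μ := volume) hg2int
    rwa [uIcc_of_le hcd.le] at this
  have hPsub : ∀ t ∈ Icc (0:ℝ) ℓ, ∀ u ∈ Icc (0:ℝ) ℓ, P t - P u = ∫ w in u..t, g2 w := by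
    intro t ht u hu
    exact intervalIntegral.integral_interval_sub_left
      ((hg2cont.mono (uIcc_subset_Icc' hcmem ht)).intervalIntegrable)
      ((hg2cont.mono (uIcc_subset_Icc' hcmem hu)).intervalIntegrable)
  have hftc2 : ∀ t ∈ Icc (0:ℝ) ℓ, ∀ u ∈ Icc (0:ℝ) ℓ, P t - P u = g1 t - g1 u := by
    intro t ht u hu
    rw [hPsub t ht u hu, ftc_within hℓ hg1c hu ht]
  set u := L⁻¹ with hudef
  have hu : 0 < u := inv_pos.mpr hL
  have hLu : L * u = 1 := mul_inv_cancel₀ hL.ne'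
  -- pointwise bound on ‖g1 s‖
  have hptw : ∀ s ∈ Icc c d, ‖g1 s‖ ≤ 18 * u ^ 2 * I₀ + I₂ := by
    intro s hs
    have hsmem : s ∈ Icc (0:ℝ) ℓ := hsub hs
    have hgyx : g y - g x = ∫ t in x..y, g1 t :=
      (ftc_within hℓ (hg.of_le one_le_two) hxmem hymem).symm
    have hxley : x ≤ y := by linarith
    have huIccxy : uIcc x y ⊆ Icc c d := by
      rw [uIcc_of_le hxley]; exact Icc_subset_Icc hxIcc.1 hyIcc.2
    have hIccxy : Icc x y ⊆ Icc c d := Icc_subset_Icc hxIcc.1 hyIcc.2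
    have hPint : IntervalIntegrable P volume x y :=
      (hPcont.mono huIccxy).intervalIntegrable
    have hint1 : (∫ t in x..y, g1 t) = (y - x) • (g1 s - P s) + ∫ t in x..y, P t := by
      have e : EqOn g1 (fun t => (g1 s - P s) + P t) (uIcc x y) := by
        intro t ht
        have htcd : t ∈ Icc c d := huIccxy ht
        have h := sub_eq_iff_eq_add.mp (hftc2 t (hsub htcd) s hsmem).symm
        rw [h]; abel
      rw [intervalIntegral.integral_congr e,
        intervalIntegral.integral_add intervalIntegrable_const hPint,
        intervalIntegral.integral_const]
    have hWbd : ∀ t ∈ Icc c d, ‖P t - P s‖ ≤ I₂ := by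
      intro t ht
      rw [hPsub t (hsub ht) s hsmem]
      refine (intervalIntegral.norm_integral_le_integral_norm_uIoc).trans ?_
      have h1 : Set.uIoc s t ⊆ Ioc c d := by
        rw [Set.uIoc]
        exact Ioc_subset_Ioc (le_min hs.1 ht.1) (max_le hs.2 ht.2)
      have h2 : IntegrableOn (fun w => ‖g2 w‖) (Ioc c d) volume :=
        ((hg2cont.mono hsub).norm.integrableOn_Icc).mono_set Ioc_subset_Icc_self
      refine (setIntegral_mono_set h2
        (Filter.Eventually.of_forall fun w => norm_nonneg _)
        (HasSubset.Subset.eventuallyLE h1)).trans ?_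
      rw [← intervalIntegral.integral_of_le hcd.le]
    have hsplit : (∫ t in x..y, (P t - P s)) = (∫ t in x..y, P t) - (y - x) • P s := by
      rw [intervalIntegral.integral_sub hPint intervalIntegrable_const,
        intervalIntegral.integral_const]
    have hmain : (y - x) • g1 s = (g y - g x) - ∫ t in x..y, (P t - P s) := by
      rw [hsplit, hgyx, hint1, smul_sub]; abel
    have hb1 : ‖∫ t in x..y, (P t - P s)‖ ≤ (y - x) * I₂ := by
      refine (intervalIntegral.norm_integral_le_integral_norm hxley).trans ?_
      have h3 : (∫ t in x..y, ‖P t - P s‖) ≤ ∫ t in x..y, I₂ :=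
        intervalIntegral.integral_mono_on hxley
          (((hPcont.mono hIccxy).sub continuousOn_const).norm.intervalIntegrable_of_Icc hxley)
          intervalIntegrable_const (fun t ht => hWbd t (hIccxy ht))
      simpa [intervalIntegral.integral_const, smul_eq_mul, mul_comm] using h3
    have hnorm : (y - x) * ‖g1 s‖ ≤ ‖g x‖ + ‖g y‖ + (y - x) * I₂ := by
      have h1 : ‖(y - x) • g1 s‖ = (y - x) * ‖g1 s‖ := by
        rw [norm_smul, Real.norm_of_nonneg hxylt.le]
      calc (y - x) * ‖g1 s‖ = ‖(y - x) • g1 s‖ := h1.symm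
        _ = ‖(g y - g x) - ∫ t in x..y, (P t - P s)‖ := by rw [hmain]
        _ ≤ ‖g y - g x‖ + ‖∫ t in x..y, (P t - P s)‖ := norm_sub_le _ _
        _ ≤ (‖g y‖ + ‖g x‖) + (y - x) * I₂ := add_le_add (norm_sub_le _ _) hb1
        _ = ‖g x‖ + ‖g y‖ + (y - x) * I₂ := by ring
    have hA : ‖g x‖ + ‖g y‖ ≤ 6 * u * I₀ := by
      have h1 : (‖g x‖ + ‖g y‖) * L ≤ 6 * I₀ := by nlinarith [hgx, hgy]
      have h2 := mul_le_mul_of_nonneg_right h1 hu.le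
      calc ‖g x‖ + ‖g y‖ = (‖g x‖ + ‖g y‖) * (L * u) := by rw [hLu]; ring
        _ = (‖g x‖ + ‖g y‖) * L * u := by ring
        _ ≤ 6 * I₀ * u := h2
        _ = 6 * u * I₀ := by ring
    have hB : 6 * u * I₀ ≤ (y - x) * (18 * u ^ 2 * I₀) := by
      have h2 : (L / 3) * (18 * u ^ 2 * I₀) ≤ (y - x) * (18 * u ^ 2 * I₀) :=
        mul_le_mul_of_nonneg_right hxy3 (by positivity)
      have h3 : (L / 3) * (18 * u ^ 2 * I₀) = 6 * (L * u) * u * I₀ := by ring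
      rw [h3, hLu] at h2
      linarith
    have hfin : (y - x) * ‖g1 s‖ ≤ (y - x) * (18 * u ^ 2 * I₀ + I₂) := by
      have he : (y - x) * (18 * u ^ 2 * I₀ + I₂)
          = (y - x) * (18 * u ^ 2 * I₀) + (y - x) * I₂ := by ring
      linarith
    exact le_of_mul_le_mul_left hfin hxylt
  -- integrate the pointwise bound
  set Q₀ := ∫ s in c..d, ‖g s‖ ^ 2 with hQ₀def
  set Q₂ := ∫ s in c..d, ‖g2 s‖ ^ 2 with hQ₂def
  have hQ₀nn : 0 ≤ Q₀ := intervalIntegral.integral_nonneg hcd.le (fun t _ => by positivity)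
  have hQ₂nn : 0 ≤ Q₂ := intervalIntegral.integral_nonneg hcd.le (fun t _ => by positivity)
  have hsq0 : I₀ ^ 2 ≤ L * Q₀ := by
    have h := sq_integral_le hcd (f := fun t => ‖g t‖) ((hgcont.mono hsub).norm)
    exact h
  have hsq2 : I₂ ^ 2 ≤ L * Q₂ := by
    have h := sq_integral_le hcd (f := fun t => ‖g2 t‖) ((hg2cont.mono hsub).norm)
    exact h
  have hmono : (∫ s in c..d, ‖g1 s‖ ^ 2) ≤ L * (18 * u ^ 2 * I₀ + I₂) ^ 2 := by
    have h1 : (∫ s in c..d, ‖g1 s‖ ^ 2) ≤ ∫ s in c..d, (18 * u ^ 2 * I₀ + I₂) ^ 2 :=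
      intervalIntegral.integral_mono_on hcd.le
        (((hg1cont.mono hsub).norm.pow 2).intervalIntegrable_of_Icc hcd.le)
        intervalIntegrable_const
        (fun t ht => by
          have h2 := hptw t ht
          nlinarith [norm_nonneg (g1 t)])
    rw [intervalIntegral.integral_const, smul_eq_mul] at h1
    exact h1
  have f1 : L * u ^ 4 * I₀ ^ 2 ≤ u ^ 2 * Q₀ := by
    have h := mul_le_mul_of_nonneg_left hsq0 (show (0:ℝ) ≤ L * u ^ 4 by positivity)
    calc L * u ^ 4 * I₀ ^ 2 = L * u ^ 4 * I₀ ^ 2 := rfl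
      _ ≤ L * u ^ 4 * (L * Q₀) := h
      _ = (L * u) * (L * u) * (u ^ 2 * Q₀) := by ring
      _ = u ^ 2 * Q₀ := by rw [hLu]; ring
  have f2 : L * I₂ ^ 2 ≤ L ^ 2 * Q₂ := by
    calc L * I₂ ^ 2 ≤ L * (L * Q₂) := mul_le_mul_of_nonneg_left hsq2 hL.le
      _ = L ^ 2 * Q₂ := by ring
  have f3 : L * (2 * (18 * u ^ 2 * I₀) * I₂) ≤ L * ((18 * u ^ 2 * I₀) ^ 2 + I₂ ^ 2) :=
    mul_le_mul_of_nonneg_left (by nlinarith [sq_nonneg (18 * u ^ 2 * I₀ - I₂)]) hL.le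
  nlinarith [hmono, f1, f2, f3, mul_nonneg (sq_nonneg L) hQ₂nn]

lemma onestep {ℓ : ℝ} (hℓ : 0 < ℓ) {g : ℝ → E} (hg : ContDiffOn ℝ 2 g (Icc 0 ℓ))
    {b : ℝ} (hb : 0 < b) (hbl : b ≤ ℓ) :
    ∫ s in (0:ℝ)..ℓ, ‖derivWithin g (Icc 0 ℓ) s‖ ^ 2 ≤
      2592 * (b⁻¹ ^ 2 * (∫ s in (0:ℝ)..ℓ, ‖g s‖ ^ 2)
        + b ^ 2 * ∫ s in (0:ℝ)..ℓ, ‖derivWithin (derivWithin g (Icc 0 ℓ)) (Icc 0 ℓ) s‖ ^ 2) := by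
  have hud := uniqueDiffOn_Icc hℓ
  set g1 := derivWithin g (Icc 0 ℓ) with hg1def
  set g2 := derivWithin g1 (Icc 0 ℓ) with hg2def
  have hg1c : ContDiffOn ℝ 1 g1 (Icc 0 ℓ) := hg.derivWithin hud (by norm_num)
  have hF1 : ContinuousOn (fun s => ‖g1 s‖ ^ 2) (Icc 0 ℓ) := hg1c.continuousOn.norm.pow 2
  have hF2 : ContinuousOn (fun s => ‖g2 s‖ ^ 2) (Icc 0 ℓ) :=
    (hg1c.continuousOn_derivWithin hud le_rfl).norm.pow 2
  have hF0 : ContinuousOn (fun s => ‖g s‖ ^ 2) (Icc 0 ℓ) := hg.continuousOn.norm.pow 2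
  set N := ⌈ℓ / b⌉₊ with hNdef
  have hN0 : 0 < N := Nat.ceil_pos.mpr (div_pos hℓ hb)
  have hNR : (0:ℝ) < N := by exact_mod_cast hN0
  set L := ℓ / N with hLdef
  have hL : 0 < L := div_pos hℓ hNR
  have hNL : (N:ℝ) * L = ℓ := by rw [hLdef]; field_simp
  have hLb : L ≤ b := by
    rw [hLdef, div_le_iff₀ hNR]
    have h1 : ℓ / b ≤ (N:ℝ) := Nat.le_ceil (ℓ / b)
    calc ℓ = (ℓ / b) * b := by field_simp
      _ ≤ (N:ℝ) * b := mul_le_mul_of_nonneg_right h1 hb.le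
      _ = b * N := mul_comm _ _
  have hbL : b ≤ 2 * L := by
    have h1 : (N:ℝ) < ℓ / b + 1 := Nat.ceil_lt_add_one (by positivity)
    have h2 : (N:ℝ) * b < (ℓ / b + 1) * b := mul_lt_mul_of_pos_right h1 hb
    have h3 : (ℓ / b + 1) * b = ℓ + b := by field_simp
    nlinarith [hNR, hNL]
  set a : ℕ → ℝ := fun i => i * L with hadef
  have ha0 : a 0 = 0 := by simp [hadef]
  have haN : a N = ℓ := hNL
  have hstep : ∀ i : ℕ, a (i + 1) - a i = L := by
    intro i; simp only [hadef]; push_cast; ring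
  have hlt : ∀ i : ℕ, a i < a (i + 1) := by
    intro i; have := hstep i; linarith
  have hsubI : ∀ i : ℕ, i < N → Icc (a i) (a (i + 1)) ⊆ Icc 0 ℓ := by
    intro i hi
    refine Icc_subset_Icc ?_ ?_
    · simp only [hadef]; positivity
    · simp only [hadef]
      rw [← hNL]
      have : (i:ℝ) + 1 ≤ (N:ℝ) := by exact_mod_cast hi
      push_cast
      nlinarith [hL.le]
  have hsum : ∀ f : ℝ → ℝ, ContinuousOn f (Icc 0 ℓ) →
      (∑ i ∈ Finset.range N, ∫ s in (a i)..(a (i + 1)), f s) = ∫ s in (0:ℝ)..ℓ, f s := by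
    intro f hf
    have h := intervalIntegral.sum_integral_adjacent_intervals (μ := volume) (a := a) (n := N)
      (f := f) (fun i hi => by
        refine (hf.mono ?_).intervalIntegrable
        rw [uIcc_of_le (hlt i).le]
        exact hsubI i hi)
    rwa [ha0, haN] at h
  have hpiece : ∀ i ∈ Finset.range N,
      (∫ s in (a i)..(a (i + 1)), ‖g1 s‖ ^ 2) ≤
        648 * L⁻¹ ^ 2 * (∫ s in (a i)..(a (i + 1)), ‖g s‖ ^ 2)
          + 648 * L ^ 2 * ∫ s in (a i)..(a (i + 1)), ‖g2 s‖ ^ 2 := by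
    intro i hi
    have h := local_estimate hℓ hg (hlt i) (hsubI i (Finset.mem_range.mp hi))
    rw [hstep i] at h
    linarith
  have hS := Finset.sum_le_sum hpiece
  rw [hsum _ hF1] at hS
  have hRHS : ∑ i ∈ Finset.range N,
      (648 * L⁻¹ ^ 2 * (∫ s in (a i)..(a (i + 1)), ‖g s‖ ^ 2)
        + 648 * L ^ 2 * ∫ s in (a i)..(a (i + 1)), ‖g2 s‖ ^ 2)
      = 648 * L⁻¹ ^ 2 * (∫ s in (0:ℝ)..ℓ, ‖g s‖ ^ 2)
        + 648 * L ^ 2 * ∫ s in (0:ℝ)..ℓ, ‖g2 s‖ ^ 2 := by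
    rw [Finset.sum_add_distrib, ← Finset.mul_sum, ← Finset.mul_sum, hsum _ hF0, hsum _ hF2]
  rw [hRHS] at hS
  -- compare L with b
  have hQ0nn : 0 ≤ ∫ s in (0:ℝ)..ℓ, ‖g s‖ ^ 2 :=
    intervalIntegral.integral_nonneg hℓ.le (fun t _ => by positivity)
  have hQ2nn : 0 ≤ ∫ s in (0:ℝ)..ℓ, ‖g2 s‖ ^ 2 :=
    intervalIntegral.integral_nonneg hℓ.le (fun t _ => by positivity)
  have hinv : L⁻¹ ^ 2 ≤ 4 * b⁻¹ ^ 2 := by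
    have h1 : L⁻¹ ≤ 2 * b⁻¹ := by
      have h2 : L⁻¹ ≤ (b / 2)⁻¹ := by
        apply inv_anti₀ (by positivity) (by linarith)
      rwa [show (b / 2)⁻¹ = 2 * b⁻¹ by rw [inv_div]; ring] at h2
    calc L⁻¹ ^ 2 ≤ (2 * b⁻¹) ^ 2 := by
          apply pow_le_pow_left₀ (by positivity) h1
      _ = 4 * b⁻¹ ^ 2 := by ring
  have hsq : L ^ 2 ≤ b ^ 2 := by apply pow_le_pow_left₀ hL.le hLb
  have m1 : 648 * L⁻¹ ^ 2 * (∫ s in (0:ℝ)..ℓ, ‖g s‖ ^ 2)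
      ≤ 648 * (4 * b⁻¹ ^ 2) * (∫ s in (0:ℝ)..ℓ, ‖g s‖ ^ 2) := by
    apply mul_le_mul_of_nonneg_right _ hQ0nn
    linarith
  have m2 : 648 * L ^ 2 * (∫ s in (0:ℝ)..ℓ, ‖g2 s‖ ^ 2)
      ≤ 648 * b ^ 2 * (∫ s in (0:ℝ)..ℓ, ‖g2 s‖ ^ 2) := by
    apply mul_le_mul_of_nonneg_right _ hQ2nn
    linarith
  nlinarith [hS, m1, m2, mul_nonneg (mul_nonneg (by norm_num : (0:ℝ) ≤ 648) (sq_nonneg b⁻¹)) hQ0nn, mul_nonneg (sq_nonneg b) hQ2nn]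


/-- **Sobolev interpolation inequality (L² version).**
For integers `n ≥ 2`, `m ≥ 1` and `0 ≤ k < n` there is a constant `C > 0`, depending only on
`k`, `n` and `m`, such that for every `ℓ > 0`, every `a` with `0 < a ≤ ℓ` and every `n`-times
continuously differentiable `H : [0, ℓ] → ℝ^m`,
`a^(2k) ∫₀^ℓ ‖H⁽ᵏ⁾‖² ≤ C (∫₀^ℓ ‖H‖² + a^(2n) ∫₀^ℓ ‖H⁽ⁿ⁾‖²)`. -/
theorem interpolation_inequality_L2 (n m k : ℕ) (hn : 2 ≤ n) (hm : 1 ≤ m) (hk : k < n) :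
    ∃ C : ℝ, 0 < C ∧
      ∀ ℓ : ℝ, 0 < ℓ → ∀ a : ℝ, 0 < a → a ≤ ℓ →
        ∀ H : ℝ → EuclideanSpace ℝ (Fin m), ContDiffOn ℝ n H (Icc 0 ℓ) →
          a ^ (2 * k) * ∫ θ in (0:ℝ)..ℓ, ‖iteratedDerivWithin k H (Icc 0 ℓ) θ‖ ^ 2 ≤
            C * ((∫ θ in (0:ℝ)..ℓ, ‖H θ‖ ^ 2) +
              a ^ (2 * n) * ∫ θ in (0:ℝ)..ℓ, ‖iteratedDerivWithin n H (Icc 0 ℓ) θ‖ ^ 2) := by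
  -- weights
  set Sc : ℝ := 10369 with hScdef
  have hScpos : (0:ℝ) < Sc := by rw [hScdef]; norm_num
  have hSc1 : (1:ℝ) ≤ Sc := by rw [hScdef]; norm_num
  set w : ℕ → ℝ := fun j => (4 * 2592 * Sc ^ (2 * n)) ^ j * (Sc ^ (j * j))⁻¹ with hwdef
  have hwpos : ∀ j, 0 < w j := fun j => by
    simp only [hwdef]; positivity
  have hw1 : ∀ i : ℕ, w i * w (i + 2) * Sc ^ 2 = w (i + 1) ^ 2 := by
    intro i
    simp only [hwdef]
    field_simp
    ring
  have hw2 : ∀ i : ℕ, i + 2 ≤ n → w (i + 1) ≤ 4 * 2592 * w (i + 2) := by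
    intro i hi
    have hclaim : w (i + 2) = w (i + 1) * (4 * 2592) * (Sc ^ (2 * n) * (Sc ^ (2 * i + 3))⁻¹) := by
      simp only [hwdef]
      field_simp
      ring
    have ht : (1:ℝ) ≤ Sc ^ (2 * n) * (Sc ^ (2 * i + 3))⁻¹ := by
      rw [← div_eq_mul_inv]
      rw [one_le_div (by positivity)]
      exact pow_le_pow_right₀ hSc1 (by omega)
    nlinarith [hclaim, ht, (hwpos (i + 1)).le, hwpos (i + 1)]
  refine ⟨w k * (w 0)⁻¹ + w k * (w n)⁻¹ + 1, by positivity, ?_⟩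
  intro ℓ hℓ a ha haℓ H hH
  have hud := uniqueDiffOn_Icc hℓ
  set A : ℕ → ℝ := fun j => ∫ θ in (0:ℝ)..ℓ, ‖iteratedDerivWithin j H (Icc 0 ℓ) θ‖ ^ 2 with hAdef
  have hAnn : ∀ j, 0 ≤ A j := fun j =>
    intervalIntegral.integral_nonneg hℓ.le (fun t _ => by positivity)
  set B : ℕ → ℝ := fun j => a ^ (2 * j) * A j with hBdef
  have hBnn : ∀ j, 0 ≤ B j := fun j => mul_nonneg (by positivity) (hAnn j)
  -- reduce to B k ≤ C (B 0 + B n)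
  have e0 : B 0 = ∫ θ in (0:ℝ)..ℓ, ‖H θ‖ ^ 2 := by
    simp [hBdef, hAdef, iteratedDerivWithin_zero]
  rw [← e0]
  show B k ≤ (w k * (w 0)⁻¹ + w k * (w n)⁻¹ + 1) * (B 0 + B n)
  -- the recursion
  have hrec : ∀ i : ℕ, i + 2 ≤ n → ∀ ε : ℝ, 0 < ε → ε ≤ 1 →
      B (i + 1) ≤ 2592 * (ε⁻¹ ^ 2 * B i + ε ^ 2 * B (i + 2)) := by
    intro i hi ε hε hε1
    have hg : ContDiffOn ℝ 2 (iteratedDerivWithin i H (Icc 0 ℓ)) (Icc 0 ℓ) :=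
      contDiffOn_iter hud hH i 2 hi
    have hb' : 0 < ε * a := mul_pos hε ha
    have hbl' : ε * a ≤ ℓ := le_trans (by nlinarith) haℓ
    have h := onestep hℓ hg hb' hbl'
    have e1 : EqOn (derivWithin (iteratedDerivWithin i H (Icc 0 ℓ)) (Icc 0 ℓ))
        (iteratedDerivWithin (i + 1) H (Icc 0 ℓ)) (Icc 0 ℓ) :=
      fun x hx => (congrFun iteratedDerivWithin_succ x).symm
    have e2 : EqOn
        (derivWithin (derivWithin (iteratedDerivWithin i H (Icc 0 ℓ)) (Icc 0 ℓ)) (Icc 0 ℓ))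
        (iteratedDerivWithin (i + 2) H (Icc 0 ℓ)) (Icc 0 ℓ) := by
      intro x hx
      have h1 : derivWithin (derivWithin (iteratedDerivWithin i H (Icc 0 ℓ)) (Icc 0 ℓ))
            (Icc 0 ℓ) x
          = derivWithin (iteratedDerivWithin (i + 1) H (Icc 0 ℓ)) (Icc 0 ℓ) x :=
        derivWithin_congr e1 (e1 hx)
      rw [h1, ← iteratedDerivWithin_succ]
    have hint1eq :
        (∫ θ in (0:ℝ)..ℓ, ‖derivWithin (iteratedDerivWithin i H (Icc 0 ℓ)) (Icc 0 ℓ) θ‖ ^ 2)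
          = A (i + 1) := by
      apply intervalIntegral.integral_congr
      intro x hx
      rw [uIcc_of_le hℓ.le] at hx
      simp [e1 hx]
    have hint2eq :
        (∫ θ in (0:ℝ)..ℓ,
            ‖derivWithin (derivWithin (iteratedDerivWithin i H (Icc 0 ℓ)) (Icc 0 ℓ))
              (Icc 0 ℓ) θ‖ ^ 2)
          = A (i + 2) := by
      apply intervalIntegral.integral_congr
      intro x hx
      rw [uIcc_of_le hℓ.le] at hx
      simp [e2 hx]
    rw [hint1eq, hint2eq] at h
    have hmul := mul_le_mul_of_nonneg_left h (show (0:ℝ) ≤ a ^ (2 * (i + 1)) by positivity)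
    have ha' : a ≠ 0 := ha.ne'
    have hε' : ε ≠ 0 := hε.ne'
    calc B (i + 1) = a ^ (2 * (i + 1)) * A (i + 1) := rfl
      _ ≤ a ^ (2 * (i + 1)) *
          (2592 * ((ε * a)⁻¹ ^ 2 * A i + (ε * a) ^ 2 * A (i + 2))) := hmul
      _ = 2592 * (ε⁻¹ ^ 2 * (a ^ (2 * i) * A i) + ε ^ 2 * (a ^ (2 * (i + 2)) * A (i + 2))) := by
          field_simp
          ring
      _ = 2592 * (ε⁻¹ ^ 2 * B i + ε ^ 2 * B (i + 2)) := rfl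
  -- maximum argument
  obtain ⟨j₀, hj₀mem, hj₀max⟩ := Finset.exists_max_image (Finset.range (n + 1))
    (fun j => B j * (w j)⁻¹) ⟨0, Finset.mem_range.mpr (by omega)⟩
  have hj₀n : j₀ ≤ n := by
    have := Finset.mem_range.mp hj₀mem; omega
  set M : ℝ := B j₀ * (w j₀)⁻¹ with hMdef
  have hM : ∀ j, j ≤ n → B j ≤ w j * M := by
    intro j hj
    have h := hj₀max j (Finset.mem_range.mpr (by omega))
    have hwj := hwpos j
    calc B j = w j * (B j * (w j)⁻¹) := by field_simp
      _ ≤ w j * M := mul_le_mul_of_nonneg_left h hwj.le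
  have hMnn : 0 ≤ M := mul_nonneg (hBnn j₀) (inv_nonneg.mpr (hwpos j₀).le)
  by_cases hj₀ : j₀ = 0 ∨ j₀ = n
  · -- maximum at an endpoint
    have hMle : M ≤ B 0 * (w 0)⁻¹ + B n * (w n)⁻¹ := by
      have h0 : 0 ≤ B 0 * (w 0)⁻¹ := mul_nonneg (hBnn 0) (inv_nonneg.mpr (hwpos 0).le)
      have hn' : 0 ≤ B n * (w n)⁻¹ := mul_nonneg (hBnn n) (inv_nonneg.mpr (hwpos n).le)
      rcases hj₀ with h | h
      · rw [hMdef, h]; linarith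
      · rw [hMdef, h]; linarith
    have hBk : B k ≤ w k * (B 0 * (w 0)⁻¹ + B n * (w n)⁻¹) :=
      (hM k (by omega)).trans (mul_le_mul_of_nonneg_left hMle (hwpos k).le)
    have hc0 : 0 < w k * (w 0)⁻¹ := by positivity
    have hc1 : 0 < w k * (w n)⁻¹ := by positivity
    have hexp : w k * (B 0 * (w 0)⁻¹ + B n * (w n)⁻¹)
        = (w k * (w 0)⁻¹) * B 0 + (w k * (w n)⁻¹) * B n := by ring
    nlinarith [hBk, hBnn 0, hBnn n, hc0, hc1,
      mul_nonneg (hc1.le) (hBnn 0), mul_nonneg (hc0.le) (hBnn n)]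
  · -- interior maximum: contradiction / M = 0
    push_neg at hj₀
    obtain ⟨i, rfl⟩ : ∃ i, j₀ = i + 1 := ⟨j₀ - 1, by omega⟩
    have hin : i + 2 ≤ n := by omega
    set ε : ℝ := Real.sqrt (w (i + 1) * (4 * 2592 * w (i + 2))⁻¹) with hεdef
    have hεsq : ε ^ 2 = w (i + 1) * (4 * 2592 * w (i + 2))⁻¹ :=
      Real.sq_sqrt (by positivity)
    have hε : 0 < ε := Real.sqrt_pos.mpr (by positivity)
    have hε1 : ε ≤ 1 := by
      rw [show (1:ℝ) = Real.sqrt 1 by simp [Real.sqrt_one]]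
      apply Real.sqrt_le_sqrt
      rw [← div_eq_mul_inv, div_le_one (by positivity)]
      linarith [hw2 i hin]
    have hεinv : ε⁻¹ ^ 2 = 4 * 2592 * w (i + 2) * (w (i + 1))⁻¹ := by
      rw [inv_pow, hεsq, mul_inv, inv_inv]
      ring
    have hrec' := hrec i hin ε hε hε1
    have hws : w i * w (i + 2) = w (i + 1) ^ 2 * (Sc ^ 2)⁻¹ := by
      have h := hw1 i
      field_simp
      linarith [h]
    have hwne : w (i + 1) ≠ 0 := (hwpos (i + 1)).ne'
    have heq1 : 2592 * (ε⁻¹ ^ 2 * w i) = (4 * 2592 ^ 2 * (Sc ^ 2)⁻¹) * w (i + 1) := by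
      rw [hεinv]
      have e : 2592 * (4 * 2592 * w (i + 2) * (w (i + 1))⁻¹ * w i)
          = 4 * 2592 ^ 2 * (w i * w (i + 2)) * (w (i + 1))⁻¹ := by ring
      rw [e, hws]
      field_simp
    have heq2 : 2592 * (ε ^ 2 * w (i + 2)) = (2592 * (4 * 2592)⁻¹) * w (i + 1) := by
      rw [hεsq, mul_inv]
      field_simp [(hwpos (i + 2)).ne']
    have hcoef1 : (4 * 2592 ^ 2 * (Sc ^ 2)⁻¹ : ℝ) ≤ 1 / 4 := by
      rw [hScdef]; norm_num
    have hcoef2 : (2592 * ((4:ℝ) * 2592)⁻¹ : ℝ) ≤ 1 / 4 := by norm_num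
    -- combine
    have hBi : B i ≤ w i * M := hM i (by omega)
    have hBi2 : B (i + 2) ≤ w (i + 2) * M := hM (i + 2) hin
    have hBMeq : w (i + 1) * M = B (i + 1) := by
      rw [hMdef]; field_simp
    have hb1 : 2592 * (ε⁻¹ ^ 2 * B i) ≤ (1 / 4) * (w (i + 1) * M) := by
      have h1 : 2592 * (ε⁻¹ ^ 2 * B i) ≤ 2592 * (ε⁻¹ ^ 2 * (w i * M)) := by
        have hp : (0:ℝ) ≤ 2592 * ε⁻¹ ^ 2 := by positivity
        nlinarith [mul_le_mul_of_nonneg_left hBi hp]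
      have h2 : 2592 * (ε⁻¹ ^ 2 * (w i * M)) = (2592 * (ε⁻¹ ^ 2 * w i)) * M := by ring
      rw [h2, heq1] at h1
      nlinarith [hcoef1, hMnn, hwpos (i + 1), mul_le_mul_of_nonneg_right hcoef1
        (mul_nonneg (hwpos (i + 1)).le hMnn)]
    have hb2 : 2592 * (ε ^ 2 * B (i + 2)) ≤ (1 / 4) * (w (i + 1) * M) := by
      have h1 : 2592 * (ε ^ 2 * B (i + 2)) ≤ 2592 * (ε ^ 2 * (w (i + 2) * M)) := by
        have hp : (0:ℝ) ≤ 2592 * ε ^ 2 := by positivity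
        nlinarith [mul_le_mul_of_nonneg_left hBi2 hp]
      have h2 : 2592 * (ε ^ 2 * (w (i + 2) * M)) = (2592 * (ε ^ 2 * w (i + 2))) * M := by ring
      rw [h2, heq2] at h1
      nlinarith [hcoef2, hMnn, hwpos (i + 1), mul_le_mul_of_nonneg_right hcoef2
        (mul_nonneg (hwpos (i + 1)).le hMnn)]
    have hhalf : B (i + 1) ≤ (1 / 2) * (w (i + 1) * M) := by
      calc B (i + 1) ≤ 2592 * (ε⁻¹ ^ 2 * B i + ε ^ 2 * B (i + 2)) := hrec'
        _ = 2592 * (ε⁻¹ ^ 2 * B i) + 2592 * (ε ^ 2 * B (i + 2)) := by ring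
        _ ≤ (1 / 4) * (w (i + 1) * M) + (1 / 4) * (w (i + 1) * M) := add_le_add hb1 hb2
        _ = (1 / 2) * (w (i + 1) * M) := by ring
    have hM0 : M ≤ 0 := by
      rw [hBMeq] at hhalf
      have hB0 : B (i + 1) ≤ 0 := by linarith
      rw [← hBMeq] at hB0
      nlinarith [hB0, hwpos (i + 1)]
    have hMeq0 : M = 0 := le_antisymm hM0 hMnn
    have hBk0 : B k ≤ 0 := by
      have := hM k (by omega)
      rw [hMeq0] at this
      simpa using this
    have hCpos : (0:ℝ) < w k * (w 0)⁻¹ + w k * (w n)⁻¹ + 1 := by positivity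
    nlinarith [hBk0, hBnn 0, hBnn n, hCpos,
      mul_nonneg hCpos.le (add_nonneg (hBnn 0) (hBnn n))]
end

section
/- Let m ≥ 1 be an integer, ℓ > 0, and let u : ℝ → ℝ^m be a twice continuously differentiable function that is ℓ-periodic, i.e. u(θ + ℓ) = u(θ) for all θ. Then sup_{θ ∈ ℝ} ‖u'(θ)‖ ≤ (1/2) ∫₀^ℓ ‖u''(σ)‖ dσ, and consequently ∫₀^ℓ ‖u'(θ)‖² dθ ≤ (ℓ²/4) ∫₀^ℓ ‖u''(θ)‖² dθ. -/
open MeasureTheory Set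

/-- **Poincaré-type estimate for periodic functions (trivial holonomy case).**
If `u : ℝ → ℝ^m` is twice continuously differentiable and `ℓ`-periodic, then
`sup_θ ‖u'(θ)‖ ≤ (1/2) ∫₀^ℓ ‖u''‖` and `∫₀^ℓ ‖u'‖² ≤ (ℓ²/4) ∫₀^ℓ ‖u''‖²`. -/
theorem periodic_first_derivative_estimate (m : ℕ) (hm : 1 ≤ m) (ℓ : ℝ) (hℓ : 0 < ℓ)
    (u : ℝ → EuclideanSpace ℝ (Fin m)) (hu : ContDiff ℝ 2 u)
    (hper : ∀ θ : ℝ, u (θ + ℓ) = u θ) :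
    (∀ θ : ℝ, ‖deriv u θ‖ ≤ (1 / 2) * ∫ σ in (0:ℝ)..ℓ, ‖iteratedDeriv 2 u σ‖) ∧
      (∫ θ in (0:ℝ)..ℓ, ‖deriv u θ‖ ^ 2) ≤
        (ℓ ^ 2 / 4) * ∫ θ in (0:ℝ)..ℓ, ‖iteratedDeriv 2 u θ‖ ^ 2 := by
  set v := deriv u with hv
  have hu2 : ContDiff ℝ (1 + 1) u := by norm_num at hu ⊢; exact hu
  have hudiff : Differentiable ℝ u := (contDiff_succ_iff_deriv.mp hu2).1
  have hv1 : ContDiff ℝ 1 v := (contDiff_succ_iff_deriv.mp hu2).2.2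
  have hvdiff : Differentiable ℝ v := hv1.differentiable one_ne_zero
  set w := deriv v with hw
  have hiter : ∀ x, iteratedDeriv 2 u x = w x := by
    intro x; rw [iteratedDeriv_succ, iteratedDeriv_one]
  have hvd : ∀ x, HasDerivAt u (v x) x := fun x => (hudiff x).hasDerivAt
  have hwd : ∀ x, HasDerivAt v (w x) x := fun x => (hvdiff x).hasDerivAt
  have hvcont : Continuous v := hvdiff.continuous
  have hwcont : Continuous w := (contDiff_one_iff_deriv.mp hv1).2
  have hvperP : Function.Periodic v ℓ := by
    intro x
    have h : (fun y => u (y + ℓ)) = u := funext hper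
    calc deriv u (x + ℓ) = deriv (fun y => u (y + ℓ)) x := (deriv_comp_add_const u ℓ x).symm
    _ = deriv u x := by rw [h]
  have hwperP : Function.Periodic w ℓ := by
    intro x
    have h : (fun y => v (y + ℓ)) = v := funext hvperP
    calc deriv v (x + ℓ) = deriv (fun y => v (y + ℓ)) x := (deriv_comp_add_const v ℓ x).symm
    _ = deriv v x := by rw [h]
  set I : ℝ := ∫ σ in (0:ℝ)..ℓ, ‖w σ‖ with hI
  have hInonneg : 0 ≤ I := intervalIntegral.integral_nonneg hℓ.le (fun x _ => norm_nonneg _)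
  have hintw : ∀ a b : ℝ, IntervalIntegrable (fun σ => ‖w σ‖) volume a b :=
    fun a b => (hwcont.norm).intervalIntegrable a b
  -- key pointwise estimate
  have key : ∀ θ : ℝ, ‖v θ‖ ≤ (1 / 2) * I := by
    intro θ
    obtain ⟨θ', h0θ', hθ'ℓ, hvθ⟩ : ∃ θ', 0 ≤ θ' ∧ θ' < ℓ ∧ v θ' = v θ := by
      refine ⟨θ - (⌊θ / ℓ⌋ : ℤ) * ℓ, ?_, ?_, hvperP.sub_int_mul_eq ⌊θ / ℓ⌋⟩
      · have h1 : (⌊θ / ℓ⌋ : ℝ) ≤ θ / ℓ := Int.floor_le _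
        nlinarith [mul_le_mul_of_nonneg_right h1 hℓ.le, div_mul_cancel₀ θ hℓ.ne']
      · have h2 : θ / ℓ < ⌊θ / ℓ⌋ + 1 := Int.lt_floor_add_one _
        nlinarith [mul_lt_mul_of_pos_right h2 hℓ, div_mul_cancel₀ θ hℓ.ne']
    rw [← hvθ]
    set e : EuclideanSpace ℝ (Fin m) := v θ' with he
    rcases eq_or_lt_of_le (norm_nonneg e) with hze | hze
    · rw [← hze]; positivity
    set g : ℝ → ℝ := fun σ => inner ℝ (v σ) e with hg
    have hgd : ∀ x, HasDerivAt g (inner ℝ (w x) e) x := by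
      intro x
      have := (hwd x).inner ℝ (hasDerivAt_const x e)
      simpa using this
    have hgcont : Continuous g := hvcont.inner continuous_const
    have hg'cont : Continuous fun x => (inner ℝ (w x) e : ℝ) := hwcont.inner continuous_const
    have hgper : Function.Periodic g ℓ := fun x => by simp [hg, hvperP x]
    have hftc : ∀ a b : ℝ, g b - g a = ∫ σ in a..b, inner ℝ (w σ) e := by
      intro a b
      rw [intervalIntegral.integral_eq_sub_of_hasDerivAt (fun x _ => hgd x)
        (hg'cont.intervalIntegrable a b)]
    have hmean : (∫ σ in (0:ℝ)..ℓ, g σ) = 0 := by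
      have hGd : ∀ x, HasDerivAt (fun σ => (inner ℝ (u σ) e : ℝ)) (g x) x := by
        intro x
        have := (hvd x).inner ℝ (hasDerivAt_const x e)
        simpa using this
      rw [intervalIntegral.integral_eq_sub_of_hasDerivAt (fun x _ => hGd x)
        (hgcont.intervalIntegrable 0 ℓ)]
      have h : u ℓ = u 0 := by rw [← zero_add ℓ, hper]
      rw [h]; ring
    obtain ⟨τ, hτmem, hgτ⟩ : ∃ τ ∈ Icc (0:ℝ) ℓ, g τ ≤ 0 := by
      by_contra h
      push_neg at h
      have hpos : 0 < ∫ σ in (0:ℝ)..ℓ, g σ :=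
        intervalIntegral.intervalIntegral_pos_of_pos_on (hgcont.intervalIntegrable 0 ℓ)
          (fun x hx => h x ⟨hx.1.le, hx.2.le⟩) hℓ
      linarith [hmean, hpos]
    have hintwe : ∀ a b : ℝ, IntervalIntegrable (fun σ => ‖w σ‖ * ‖e‖) volume a b :=
      fun a b => (hwcont.norm.mul continuous_const).intervalIntegrable a b
    have harc : ∀ a b : ℝ, a ≤ b → |g b - g a| ≤ ∫ σ in a..b, ‖w σ‖ * ‖e‖ := by
      intro a b hab
      rw [hftc a b]
      calc |∫ σ in a..b, (inner ℝ (w σ) e : ℝ)| ≤ ∫ σ in a..b, |(inner ℝ (w σ) e : ℝ)| :=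
        intervalIntegral.abs_integral_le_integral_abs hab
      _ ≤ ∫ σ in a..b, ‖w σ‖ * ‖e‖ := by
          apply intervalIntegral.integral_mono_on hab
            (hg'cont.abs.intervalIntegrable a b) (hintwe a b)
          intro x _
          exact abs_real_inner_le_norm _ _
    have hIe : (∫ σ in (0:ℝ)..ℓ, ‖w σ‖ * ‖e‖) = I * ‖e‖ := by
      rw [hI, ← intervalIntegral.integral_mul_const]
    have hper_int : ∀ t : ℝ, (∫ σ in t..(t + ℓ), ‖w σ‖ * ‖e‖) = I * ‖e‖ := by
      intro t
      have hp : Function.Periodic (fun σ => ‖w σ‖ * ‖e‖) ℓ := fun x => by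
        simp [hwperP x]
      rw [hp.intervalIntegral_add_eq t 0, zero_add, hIe]
    have hmain : 2 * g θ' ≤ I * ‖e‖ := by
      rcases le_total θ' τ with hc | hc
      · have h1 : g θ' - g τ ≤ |g τ - g θ'| := le_trans (le_abs_self _) (by rw [abs_sub_comm])
        have h2 : g θ' - g τ ≤ |g (θ' + ℓ) - g τ| := by
          rw [hgper θ']; exact le_abs_self _
        have hb1 := harc θ' τ hc
        have hb2 := harc τ (θ' + ℓ) (by linarith [hτmem.2])
        have hsplit : (∫ σ in θ'..τ, ‖w σ‖ * ‖e‖) + ∫ σ in τ..(θ' + ℓ), ‖w σ‖ * ‖e‖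
            = ∫ σ in θ'..(θ' + ℓ), ‖w σ‖ * ‖e‖ :=
          intervalIntegral.integral_add_adjacent_intervals (hintwe _ _) (hintwe _ _)
        have h3 := hper_int θ'
        linarith
      · have h1 : g θ' - g τ ≤ |g θ' - g τ| := le_abs_self _
        have h2 : g θ' - g τ ≤ |g (τ + ℓ) - g θ'| := by
          calc g θ' - g τ = g θ' - g (τ + ℓ) := by rw [hgper τ]
          _ ≤ |g θ' - g (τ + ℓ)| := le_abs_self _
          _ = |g (τ + ℓ) - g θ'| := abs_sub_comm _ _
        have hb1 := harc τ θ' hc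
        have hb2 := harc θ' (τ + ℓ) (by linarith [hτmem.1])
        have hsplit : (∫ σ in τ..θ', ‖w σ‖ * ‖e‖) + ∫ σ in θ'..(τ + ℓ), ‖w σ‖ * ‖e‖
            = ∫ σ in τ..(τ + ℓ), ‖w σ‖ * ‖e‖ :=
          intervalIntegral.integral_add_adjacent_intervals (hintwe _ _) (hintwe _ _)
        have h3 := hper_int τ
        linarith
    have hgθ' : g θ' = ‖e‖ ^ 2 := real_inner_self_eq_norm_sq e
    rw [hgθ'] at hmain
    nlinarith
  constructor
  · intro θ
    have h := key θ
    calc ‖deriv u θ‖ ≤ (1 / 2) * I := h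
    _ = (1 / 2) * ∫ σ in (0:ℝ)..ℓ, ‖iteratedDeriv 2 u σ‖ := by
        congr 1
        exact (intervalIntegral.integral_congr (fun x _ => by rw [hiter x])).symm
  · -- second part
    set J : ℝ := ∫ σ in (0:ℝ)..ℓ, ‖w σ‖ ^ 2 with hJ
    have hintw2 : ∀ a b : ℝ, IntervalIntegrable (fun σ => ‖w σ‖ ^ 2) volume a b :=
      fun a b => ((hwcont.norm).pow 2).intervalIntegrable a b
    -- Cauchy--Schwarz: I^2 ≤ ℓ * J
    have hCS : I ^ 2 ≤ ℓ * J := by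
      have hnn : 0 ≤ ∫ σ in (0:ℝ)..ℓ, (‖w σ‖ - I / ℓ) ^ 2 :=
        intervalIntegral.integral_nonneg hℓ.le (fun x _ => sq_nonneg _)
      have hexp : (∫ σ in (0:ℝ)..ℓ, (‖w σ‖ - I / ℓ) ^ 2)
          = J - 2 * (I / ℓ) * I + (I / ℓ) ^ 2 * ℓ := by
        have h1 : ∀ σ : ℝ, (‖w σ‖ - I / ℓ) ^ 2
            = ‖w σ‖ ^ 2 - (2 * (I / ℓ)) * ‖w σ‖ + (I / ℓ) ^ 2 := by intro σ; ring
        rw [intervalIntegral.integral_congr (fun x _ => h1 x)]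
        rw [intervalIntegral.integral_add (((hintw2 0 ℓ).sub
          ((hintw 0 ℓ).const_mul _))) (intervalIntegrable_const),
          intervalIntegral.integral_sub (hintw2 0 ℓ) ((hintw 0 ℓ).const_mul _),
          intervalIntegral.integral_const_mul, intervalIntegral.integral_const]
        simp only [smul_eq_mul, sub_zero]
        rw [← hI, ← hJ]; ring
      have heq2 : J - I ^ 2 / ℓ = J - 2 * (I / ℓ) * I + (I / ℓ) ^ 2 * ℓ := by
        field_simp; ring
      rw [hexp, ← heq2, sub_nonneg] at hnn
      have := (div_le_iff₀ hℓ).mp hnn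
      linarith
    have hsq : ∀ θ : ℝ, ‖v θ‖ ^ 2 ≤ ((1 / 2) * I) ^ 2 := by
      intro θ
      exact pow_le_pow_left₀ (norm_nonneg _) (key θ) 2
    have hineq : (∫ θ in (0:ℝ)..ℓ, ‖v θ‖ ^ 2) ≤ ℓ * ((1 / 2) * I) ^ 2 := by
      calc (∫ θ in (0:ℝ)..ℓ, ‖v θ‖ ^ 2) ≤ ∫ _ in (0:ℝ)..ℓ, ((1 / 2) * I) ^ 2 := by
            apply intervalIntegral.integral_mono_on hℓ.le
              (((hvcont.norm).pow 2).intervalIntegrable 0 ℓ) intervalIntegrable_const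
            intro x _; exact hsq x
      _ = ℓ * ((1 / 2) * I) ^ 2 := by
            rw [intervalIntegral.integral_const, smul_eq_mul]; ring
    have hJeq : (∫ θ in (0:ℝ)..ℓ, ‖iteratedDeriv 2 u θ‖ ^ 2) = J :=
      intervalIntegral.integral_congr (fun x _ => by rw [hiter x])
    rw [hJeq]
    have hJnn : 0 ≤ J := intervalIntegral.integral_nonneg hℓ.le (fun x _ => sq_nonneg _)
    calc (∫ θ in (0:ℝ)..ℓ, ‖deriv u θ‖ ^ 2) ≤ ℓ * ((1 / 2) * I) ^ 2 := hineq
    _ = (ℓ / 4) * I ^ 2 := by ring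
    _ ≤ (ℓ / 4) * (ℓ * J) := by
        apply mul_le_mul_of_nonneg_left hCS; positivity
    _ = (ℓ ^ 2 / 4) * J := by ring
end

section
/- Let n ≥ 2 be an integer and a₀, a₁, …, a_n ≥ 0 be constants. Fix t ∈ [0,1) and real numbers p, q, and define the curve c : [0, 2π] → ℝ² by c(θ) = ((1−t)(θ−π) + x₀, y₀) translated arbitrarily, i.e. any curve with ∂_θ c(θ) = (1−t, 0), together with the vector field h : [0, 2π] → ℝ² given by h(θ) = (p − (θ−π), q). Then, with D_s := ‖∂_θ c‖^{-1} ∂_θ, one has D_s h(θ) = (−(1−t)^{-1}, 0) for all θ, D_s^i h = 0 for all i ≥ 2, and Σ_{i=0}^{n} a_i ∫₀^{2π} ‖D_s^i h(θ)‖² ‖∂_θ c(θ)‖ dθ = 2π (1−t) a₀ ( π²/3 + p² + q² ) + 2π a₁ (1−t)^{-1}. -/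
open Real MeasureTheory

/-- The vector `(x, y)` in the Euclidean plane `ℝ²`. -/
noncomputable def vec2 (x y : ℝ) : EuclideanSpace ℝ (Fin 2) :=
  (WithLp.equiv 2 (Fin 2 → ℝ)).symm ![x, y]

/-- The arc-length derivative `D_s = ‖∂_θ c‖⁻¹ ∂_θ` along a plane curve `c`. -/
noncomputable def Ds (c : ℝ → EuclideanSpace ℝ (Fin 2)) (h : ℝ → EuclideanSpace ℝ (Fin 2)) :
    ℝ → EuclideanSpace ℝ (Fin 2) :=
  fun θ => ‖deriv c θ‖⁻¹ • deriv h θ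

lemma norm_vec2 (x y : ℝ) : ‖vec2 x y‖ = Real.sqrt (x ^ 2 + y ^ 2) := by
  rw [EuclideanSpace.norm_eq]
  simp [show ∀ i, vec2 x y i = ![x,y] i from fun _ => rfl, Fin.sum_univ_two, sq_abs]

lemma sq_norm_vec2 (x y : ℝ) : ‖vec2 x y‖ ^ 2 = x ^ 2 + y ^ 2 := by
  rw [norm_vec2, Real.sq_sqrt (by positivity)]

lemma smul_vec2 (a x y : ℝ) : a • vec2 x y = vec2 (a * x) (a * y) := by
  ext i; fin_cases i <;> simp [vec2]

lemma add_vec2 (x y x' y' : ℝ) : vec2 x y + vec2 x' y' = vec2 (x + x') (y + y') := by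
  ext i; fin_cases i <;> simp [vec2]

lemma Ds_const (c : ℝ → EuclideanSpace ℝ (Fin 2)) (g : ℝ → EuclideanSpace ℝ (Fin 2))
    (v : EuclideanSpace ℝ (Fin 2)) (hg : ∀ θ, g θ = v) (θ : ℝ) : Ds c g θ = 0 := by
  have : g = fun _ => v := funext hg
  simp [Ds, this]

/-- **Energy of the shrinking straight lines.**
For any curve `c` with `∂_θ c = (1−t, 0)` and the field `h(θ) = (p − (θ−π), q)`, one has
`D_s h = (−(1−t)⁻¹, 0)`, `D_s^i h = 0` for `i ≥ 2`, and
`Σ_{i=0}^n a_i ∫₀^{2π} ‖D_s^i h‖² ‖∂_θ c‖ dθ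
  = 2π(1−t)a₀(π²/3 + p² + q²) + 2π a₁ (1−t)⁻¹`. -/
theorem shrinking_line_energy (n : ℕ) (hn : 2 ≤ n) (a : ℕ → ℝ) (ha : ∀ i, 0 ≤ a i)
    (t : ℝ) (ht0 : 0 ≤ t) (ht1 : t < 1) (p q : ℝ)
    (c : ℝ → EuclideanSpace ℝ (Fin 2))
    (hc : ∀ θ : ℝ, deriv c θ = vec2 (1 - t) 0)
    (h : ℝ → EuclideanSpace ℝ (Fin 2))
    (hh : ∀ θ : ℝ, h θ = vec2 (p - (θ - π)) q) :
    (∀ θ : ℝ, Ds c h θ = vec2 (-(1 - t)⁻¹) 0) ∧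
    (∀ i : ℕ, 2 ≤ i → ∀ θ : ℝ, (Ds c)^[i] h θ = 0) ∧
    (∑ i ∈ Finset.range (n + 1),
        a i * ∫ θ in (0:ℝ)..(2 * π), ‖(Ds c)^[i] h θ‖ ^ 2 * ‖deriv c θ‖) =
      2 * π * (1 - t) * a 0 * (π ^ 2 / 3 + p ^ 2 + q ^ 2) + 2 * π * a 1 * (1 - t)⁻¹ := by
  have h1t : (0:ℝ) < 1 - t := by linarith
  have hnc : ∀ θ : ℝ, ‖deriv c θ‖ = 1 - t := by
    intro θ
    rw [hc, norm_vec2]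
    simpa using Real.sqrt_sq h1t.le
  have hderiv_h : ∀ θ : ℝ, deriv h θ = vec2 (-1) 0 := by
    intro θ
    have hfun : h = fun θ => vec2 (p + π) q + θ • vec2 (-1) 0 := by
      funext θ; rw [hh, smul_vec2, add_vec2]; ring_nf
    rw [hfun]
    exact (((hasDerivAt_id θ).smul_const (vec2 (-1) 0)).const_add
      (vec2 (p + π) q)).deriv.trans (by simp)
  have hDs1 : ∀ θ : ℝ, Ds c h θ = vec2 (-(1 - t)⁻¹) 0 := by
    intro θ
    rw [Ds, hnc, hderiv_h, smul_vec2]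
    ring_nf
  have hDsi : ∀ i : ℕ, 2 ≤ i → ∀ θ : ℝ, (Ds c)^[i] h θ = 0 := by
    intro i hi
    induction i with
    | zero => omega
    | succ k ih =>
      rcases Nat.lt_or_ge k 2 with hk | hk
      · interval_cases k
        · omega
        · intro θ
          rw [Function.iterate_succ_apply', Function.iterate_one]
          exact Ds_const c _ _ hDs1 θ
      · intro θ
        rw [Function.iterate_succ_apply']
        exact Ds_const c _ 0 (ih hk) θ
  refine ⟨hDs1, hDsi, ?_⟩
  have hsum : (∑ i ∈ Finset.range (n + 1),
      a i * ∫ θ in (0:ℝ)..(2 * π), ‖(Ds c)^[i] h θ‖ ^ 2 * ‖deriv c θ‖) =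
      ∑ i ∈ Finset.range 2,
      a i * ∫ θ in (0:ℝ)..(2 * π), ‖(Ds c)^[i] h θ‖ ^ 2 * ‖deriv c θ‖ := by
    refine (Finset.sum_subset (by intro x hx; simp at hx ⊢; omega) ?_).symm
    intro i _ hi
    simp only [Finset.mem_range, not_lt] at hi
    have : ∀ θ : ℝ, ‖(Ds c)^[i] h θ‖ ^ 2 * ‖deriv c θ‖ = 0 := by
      intro θ; rw [hDsi i hi θ]; simp
    simp [this]
  rw [hsum, Finset.sum_range_succ, Finset.sum_range_one]
  have I0 : (∫ θ in (0:ℝ)..(2 * π), ‖(Ds c)^[0] h θ‖ ^ 2 * ‖deriv c θ‖) =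
      2 * π * (1 - t) * (π ^ 2 / 3 + p ^ 2 + q ^ 2) := by
    simp only [Function.iterate_zero, id_eq]
    have hig : ∀ θ : ℝ, ‖h θ‖ ^ 2 * ‖deriv c θ‖ =
        (1 - t) * ((θ - (π + p)) ^ 2 + q ^ 2) := by
      intro θ; rw [hh, hnc, sq_norm_vec2]; ring
    have hF : ∀ θ ∈ Set.uIcc (0:ℝ) (2 * π), HasDerivAt
        (fun θ : ℝ => (1 - t) * ((θ - (π + p)) ^ 3 / 3 + q ^ 2 * θ))
        (‖h θ‖ ^ 2 * ‖deriv c θ‖) θ := by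
      intro θ _
      rw [hig]
      have h1 : HasDerivAt (fun θ : ℝ => θ - (π + p)) 1 θ := (hasDerivAt_id θ).sub_const _
      have h2 := (h1.pow 3).div_const 3
      have h3 := (hasDerivAt_id θ).const_mul (q ^ 2)
      have := ((h2.add h3).const_mul (1 - t))
      refine this.congr_deriv ?_
      push_cast
      ring
    rw [intervalIntegral.integral_eq_sub_of_hasDerivAt hF
      (by apply Continuous.intervalIntegrable; simp only [hig]; fun_prop)]
    ring
  have I1 : (∫ θ in (0:ℝ)..(2 * π), ‖(Ds c)^[1] h θ‖ ^ 2 * ‖deriv c θ‖) =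
      2 * π * (1 - t)⁻¹ := by
    simp only [Function.iterate_one]
    have hig : ∀ θ : ℝ, ‖Ds c h θ‖ ^ 2 * ‖deriv c θ‖ = (1 - t)⁻¹ := by
      intro θ
      rw [hDs1, hnc, sq_norm_vec2]
      field_simp
      ring
    simp only [hig, intervalIntegral.integral_const, smul_eq_mul]
    ring
  rw [I0, I1]
  ring
end

section
/- Let n ≥ 2 be an integer and a₀, a₁, …, a_n ≥ 0 be constants. Let f, g : [0,1) → ℝ be continuously differentiable functions satisfying ∫₀¹ |f'(t)| √(1−t) dt < ∞ and ∫₀¹ |g'(t)| √(1−t) dt < ∞. Then ∫₀¹ ( 2π (1−t) a₀ ( π²/3 + f'(t)² + g'(t)² ) + 2π a₁ (1−t)^{-1} )^{1/2} dt < ∞. -/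
open Real MeasureTheory Set

private lemma sqrt_add_le' (x y : ℝ) (hx : 0 ≤ x) (hy : 0 ≤ y) :
    Real.sqrt (x + y) ≤ Real.sqrt x + Real.sqrt y := by
  have h := Real.sqrt_le_sqrt (show x + y ≤ (Real.sqrt x + Real.sqrt y) ^ 2 by
    nlinarith [Real.sq_sqrt hx, Real.sq_sqrt hy, Real.sqrt_nonneg x, Real.sqrt_nonneg y,
      mul_nonneg (Real.sqrt_nonneg x) (Real.sqrt_nonneg y)])
  rwa [Real.sqrt_sq (by positivity)] at h

private lemma inv_sqrt_integrable :
    IntegrableOn (fun t : ℝ => (Real.sqrt (1 - t))⁻¹) (Ico 0 1) := by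
  have h0 : IntervalIntegrable (fun x : ℝ => x ^ (-(1/2) : ℝ)) volume 0 1 :=
    intervalIntegral.intervalIntegrable_rpow' (by norm_num)
  have h1 : IntervalIntegrable (fun x : ℝ => (1 - x) ^ (-(1/2) : ℝ)) volume 0 1 := by
    have := h0.comp_sub_left 1
    simpa using this.symm
  have h2 : IntegrableOn (fun x : ℝ => (1 - x) ^ (-(1/2) : ℝ)) (Ioc 0 1) := by
    rwa [intervalIntegrable_iff_integrableOn_Ioc_of_le (by norm_num)] at h1
  have h3 : IntegrableOn (fun x : ℝ => (1 - x) ^ (-(1/2) : ℝ)) (Ioo 0 1) :=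
    h2.mono_set Ioo_subset_Ioc_self
  rw [integrableOn_Ico_iff_integrableOn_Ioo]
  apply h3.congr_fun _ measurableSet_Ioo
  intro x hx
  have h1x : (0:ℝ) ≤ 1 - x := by linarith [hx.2]
  simp only [Real.sqrt_eq_rpow, ← Real.rpow_neg h1x]

/-- **Finite-length escape to zero length (metric incompleteness of open curves).**
If `f, g : [0,1) → ℝ` are continuously differentiable with
`∫₀¹ |f'| √(1−t) dt < ∞` and `∫₀¹ |g'| √(1−t) dt < ∞`, then the `G`-speed of the shrinking
straight-line path, `t ↦ √(2π(1−t)a₀(π²/3 + f'(t)² + g'(t)²) + 2π a₁ (1−t)⁻¹)`,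
is integrable on `[0,1)`, i.e. the path has finite length. -/
theorem shrinking_line_finite_length (n : ℕ) (hn : 2 ≤ n) (a : ℕ → ℝ) (ha : ∀ i, 0 ≤ a i)
    (f g f' g' : ℝ → ℝ)
    (hf : ∀ t ∈ Ico (0:ℝ) 1, HasDerivWithinAt f (f' t) (Ico 0 1) t)
    (hg : ∀ t ∈ Ico (0:ℝ) 1, HasDerivWithinAt g (g' t) (Ico 0 1) t)
    (hf' : ContinuousOn f' (Ico 0 1)) (hg' : ContinuousOn g' (Ico 0 1))
    (hfint : IntegrableOn (fun t => |f' t| * Real.sqrt (1 - t)) (Ico 0 1))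
    (hgint : IntegrableOn (fun t => |g' t| * Real.sqrt (1 - t)) (Ico 0 1)) :
    IntegrableOn
      (fun t => Real.sqrt (2 * π * (1 - t) * a 0 * (π ^ 2 / 3 + f' t ^ 2 + g' t ^ 2) +
        2 * π * a 1 * (1 - t)⁻¹)) (Ico 0 1) := by
  have hπ := Real.pi_pos
  set c0 : ℝ := 2 * π * a 0 with hc0
  set c1 : ℝ := 2 * π * a 1 with hc1
  have hc0n : 0 ≤ c0 := mul_nonneg (by positivity) (ha 0)
  have hc1n : 0 ≤ c1 := mul_nonneg (by positivity) (ha 1)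
  -- bound function
  set B : ℝ → ℝ := fun t =>
    Real.sqrt c0 * Real.sqrt (π ^ 2 / 3) * Real.sqrt (1 - t)
      + Real.sqrt c0 * (|f' t| * Real.sqrt (1 - t))
      + Real.sqrt c0 * (|g' t| * Real.sqrt (1 - t))
      + Real.sqrt c1 * (Real.sqrt (1 - t))⁻¹ with hB
  have hsqrtcont : IntegrableOn (fun t : ℝ => Real.sqrt (1 - t)) (Ico 0 1) := by
    have : Continuous fun t : ℝ => Real.sqrt (1 - t) :=
      Real.continuous_sqrt.comp (continuous_const.sub continuous_id)
    exact (this.integrableOn_Icc (a := 0) (b := 1)).mono_set Ico_subset_Icc_self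
  have hBint : IntegrableOn B (Ico 0 1) := by
    exact (((hsqrtcont.const_mul _).add (hfint.const_mul _)).add
      (hgint.const_mul _)).add (inv_sqrt_integrable.const_mul _)
  -- measurability of the target function
  have hmeas : AEStronglyMeasurable
      (fun t => Real.sqrt (2 * π * (1 - t) * a 0 * (π ^ 2 / 3 + f' t ^ 2 + g' t ^ 2) +
        2 * π * a 1 * (1 - t)⁻¹)) (volume.restrict (Ico (0:ℝ) 1)) := by
    apply ContinuousOn.aestronglyMeasurable _ measurableSet_Ico
    apply Real.continuous_sqrt.comp_continuousOn
    apply ContinuousOn.add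
    · exact (((continuousOn_const.mul
        ((continuous_const.sub continuous_id).continuousOn)).mul continuousOn_const).mul
        ((continuousOn_const.add ((hf'.pow 2))).add (hg'.pow 2)))
    · apply continuousOn_const.mul
      apply ContinuousOn.inv₀ ((continuous_const.sub continuous_id).continuousOn)
      intro x hx
      have := hx.2
      show (1:ℝ) - x ≠ 0
      intro h; linarith [sub_eq_zero.mp h]
  -- pointwise bound
  apply Integrable.mono' hBint hmeas
  rw [ae_restrict_iff' measurableSet_Ico]
  filter_upwards with t ht
  obtain ⟨ht0, ht1⟩ := ht
  have hs : (0:ℝ) < 1 - t := by linarith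
  have hA : (0:ℝ) ≤ 2 * π * (1 - t) * a 0 * (π ^ 2 / 3 + f' t ^ 2 + g' t ^ 2) :=
    mul_nonneg (mul_nonneg (by positivity) (ha 0)) (by positivity)
  have hBt : (0:ℝ) ≤ 2 * π * a 1 * (1 - t)⁻¹ :=
    mul_nonneg (mul_nonneg (by positivity) (ha 1)) (by positivity)
  rw [Real.norm_eq_abs, abs_of_nonneg (Real.sqrt_nonneg _)]
  calc Real.sqrt (2 * π * (1 - t) * a 0 * (π ^ 2 / 3 + f' t ^ 2 + g' t ^ 2) +
        2 * π * a 1 * (1 - t)⁻¹)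
      ≤ Real.sqrt (2 * π * (1 - t) * a 0 * (π ^ 2 / 3 + f' t ^ 2 + g' t ^ 2))
        + Real.sqrt (2 * π * a 1 * (1 - t)⁻¹) := sqrt_add_le' _ _ hA hBt
    _ ≤ B t := by
        have e1 : 2 * π * (1 - t) * a 0 * (π ^ 2 / 3 + f' t ^ 2 + g' t ^ 2)
            = c0 * (1 - t) * (π ^ 2 / 3) + (c0 * (1 - t) * f' t ^ 2 + c0 * (1 - t) * g' t ^ 2) := by
          rw [hc0]; ring
        have e2 : 2 * π * a 1 * (1 - t)⁻¹ = c1 * (1 - t)⁻¹ := by rw [hc1]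
        rw [e1, e2]
        have hstep1 : Real.sqrt (c0 * (1 - t) * (π ^ 2 / 3) +
            (c0 * (1 - t) * f' t ^ 2 + c0 * (1 - t) * g' t ^ 2))
            ≤ Real.sqrt (c0 * (1 - t) * (π ^ 2 / 3)) + (Real.sqrt (c0 * (1 - t) * f' t ^ 2)
              + Real.sqrt (c0 * (1 - t) * g' t ^ 2)) := by
          refine (sqrt_add_le' _ _ (by positivity) (by positivity)).trans ?_
          gcongr
          exact sqrt_add_le' _ _ (by positivity) (by positivity)
        have hm : ∀ x : ℝ, Real.sqrt (c0 * (1 - t) * x ^ 2)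
            = Real.sqrt c0 * (|x| * Real.sqrt (1 - t)) := by
          intro x
          rw [Real.sqrt_mul (by positivity), Real.sqrt_mul hc0n, Real.sqrt_sq_eq_abs]
          ring
        have h1 : Real.sqrt (c0 * (1 - t) * (π ^ 2 / 3))
            = Real.sqrt c0 * Real.sqrt (π ^ 2 / 3) * Real.sqrt (1 - t) := by
          rw [Real.sqrt_mul (by positivity), Real.sqrt_mul hc0n]
          ring
        have h4 : Real.sqrt (c1 * (1 - t)⁻¹)
            = Real.sqrt c1 * (Real.sqrt (1 - t))⁻¹ := by
          rw [Real.sqrt_mul hc1n, Real.sqrt_inv]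
        rw [hB]
        simp only
        rw [h4]
        have := hstep1
        rw [h1, hm (f' t), hm (g' t)] at this
        linarith
end

section
/- Define f : [0,1) → ℝ by f(t) = sin(−log(1−t)). Then f is continuously differentiable on [0,1), the integral ∫₀¹ |f'(t)| √(1−t) dt is finite and at most 2, and the limit lim_{t → 1⁻} f(t) does not exist. -/
open Real MeasureTheory Set Filter

lemma slex_hasDerivAt {t : ℝ} (ht : t < 1) :
    HasDerivAt (fun s : ℝ => Real.sin (-Real.log (1 - s)))
      (Real.cos (-Real.log (1 - t)) * (1 / (1 - t))) t := by
  have h1 : (0:ℝ) < 1 - t := by linarith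
  have hsub : HasDerivAt (fun s : ℝ => 1 - s) (-1) t := by
    simpa using (hasDerivAt_id' t).const_sub (1:ℝ)
  have hlog : HasDerivAt (fun s : ℝ => Real.log (1 - s)) ((1 - t)⁻¹ * (-1)) t :=
    (Real.hasDerivAt_log h1.ne').comp t hsub
  have hneg : HasDerivAt (fun s : ℝ => -Real.log (1 - s)) (1 / (1 - t)) t := by
    have := hlog.fun_neg
    simpa [one_div] using this
  exact (Real.hasDerivAt_sin _).comp t hneg

lemma slex_deriv {t : ℝ} (ht : t < 1) :
    deriv (fun s : ℝ => Real.sin (-Real.log (1 - s))) t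
      = Real.cos (-Real.log (1 - t)) * (1 / (1 - t)) :=
  (slex_hasDerivAt ht).deriv

lemma slex_bound {t : ℝ} (ht : t ∈ Ico (0:ℝ) 1) :
    |deriv (fun s : ℝ => Real.sin (-Real.log (1 - s))) t| * Real.sqrt (1 - t)
      ≤ (1 - t) ^ (-(1/2) : ℝ) := by
  have h1 : (0:ℝ) < 1 - t := by linarith [ht.2]
  rw [slex_deriv ht.2, abs_mul]
  have hc : |Real.cos (-Real.log (1 - t))| ≤ 1 := Real.abs_cos_le_one _
  have hs : Real.sqrt (1 - t) ≥ 0 := Real.sqrt_nonneg _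
  have key : |1 / (1 - t)| * Real.sqrt (1 - t) = (1 - t) ^ (-(1/2) : ℝ) := by
    rw [abs_of_pos (by positivity), Real.rpow_neg h1.le, ← Real.sqrt_eq_rpow]
    have hsq : Real.sqrt (1 - t) * Real.sqrt (1 - t) = 1 - t := Real.mul_self_sqrt h1.le
    have hsp : (0:ℝ) < Real.sqrt (1 - t) := Real.sqrt_pos.mpr h1
    field_simp
    exact Real.sq_sqrt h1.le
  calc |Real.cos (-Real.log (1 - t))| * |1 / (1 - t)| * Real.sqrt (1 - t)
      ≤ 1 * |1 / (1 - t)| * Real.sqrt (1 - t) := by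
        gcongr
    _ = (1 - t) ^ (-(1/2) : ℝ) := by rw [one_mul, key]

lemma slex_pow_intInt : IntervalIntegrable (fun t : ℝ => (1 - t) ^ (-(1/2) : ℝ)) volume 0 1 := by
  have h := (intervalIntegral.intervalIntegrable_rpow' (a := 0) (b := 1)
    (r := (-(1/2) : ℝ)) (by norm_num)).comp_sub_left 1
  simpa using h.symm

lemma slex_pow_integrableOn : IntegrableOn (fun t : ℝ => (1 - t) ^ (-(1/2) : ℝ)) (Ico 0 1) := by
  have := (intervalIntegrable_iff_integrableOn_Ioo_of_le (by norm_num : (0:ℝ) ≤ 1)).mp slex_pow_intInt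
  exact (integrableOn_Ico_iff_integrableOn_Ioo).mpr this

lemma slex_pow_integral :
    ∫ t in Ico (0:ℝ) 1, (1 - t) ^ (-(1/2) : ℝ) = 2 := by
  rw [integral_Ico_eq_integral_Ioo, ← integral_Ioc_eq_integral_Ioo,
    ← intervalIntegral.integral_of_le (by norm_num : (0:ℝ) ≤ 1)]
  have h := intervalIntegral.integral_comp_sub_left (a := 0) (b := 1)
    (fun x : ℝ => x ^ (-(1/2) : ℝ)) 1
  simp only [sub_zero, sub_self] at h
  rw [h, integral_rpow (Or.inl (by norm_num))]
  norm_num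

lemma slex_limit_eq (L x : ℝ)
    (hL : Tendsto (fun t : ℝ => Real.sin (-Real.log (1 - t)))
      (nhdsWithin 1 (Iio 1)) (nhds L)) : L = Real.sin x := by
  set t : ℕ → ℝ := fun n => 1 - Real.exp (-(x + n * (2 * π))) with ht
  have ht1 : ∀ n, t n ∈ Iio (1:ℝ) := by
    intro n
    have : (0:ℝ) < Real.exp (-(x + n * (2 * π))) := Real.exp_pos _
    simp only [ht, mem_Iio]
    linarith
  have hx : Tendsto (fun n : ℕ => x + n * (2 * π)) atTop atTop := by
    apply tendsto_atTop_add_const_left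
    exact Tendsto.atTop_mul_const (by positivity) tendsto_natCast_atTop_atTop
  have hexp : Tendsto (fun n : ℕ => Real.exp (-(x + n * (2 * π)))) atTop (nhds 0) :=
    Real.tendsto_exp_atBot.comp (tendsto_neg_atTop_atBot.comp hx)
  have htt : Tendsto t atTop (nhds 1) := by
    have := Tendsto.sub (tendsto_const_nhds (α := ℕ) (x := (1:ℝ))) hexp
    simpa only [sub_zero] using this
  have htt' : Tendsto t atTop (nhdsWithin 1 (Iio 1)) :=
    tendsto_nhdsWithin_of_tendsto_nhds_of_eventually_within _ htt (Eventually.of_forall ht1)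
  have hcomp := hL.comp htt'
  have heq : ((fun s : ℝ => Real.sin (-Real.log (1 - s))) ∘ t) = fun _ => Real.sin x := by
    funext n
    have : (1:ℝ) - t n = Real.exp (-(x + n * (2 * π))) := by simp [ht]
    simp only [Function.comp, this, Real.log_exp, neg_neg]
    exact Real.sin_add_nat_mul_two_pi x n
  rw [heq] at hcomp
  exact tendsto_nhds_unique hcomp tendsto_const_nhds

lemma slex_aesm :
    AEStronglyMeasurable
      (fun t => |deriv (fun s : ℝ => Real.sin (-Real.log (1 - s))) t| * Real.sqrt (1 - t))
      (volume.restrict (Ico (0:ℝ) 1)) := by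
  apply Measurable.aestronglyMeasurable
  exact ((measurable_deriv _).abs.mul
    ((Real.continuous_sqrt.comp (continuous_const.sub continuous_id)).measurable))

lemma slex_integrable :
    IntegrableOn
      (fun t => |deriv (fun s : ℝ => Real.sin (-Real.log (1 - s))) t| * Real.sqrt (1 - t))
      (Ico (0:ℝ) 1) := by
  apply Integrable.mono' slex_pow_integrableOn slex_aesm
  rw [ae_restrict_iff' measurableSet_Ico]
  refine Eventually.of_forall fun t ht => ?_
  rw [Real.norm_eq_abs, abs_mul, abs_abs, abs_of_nonneg (Real.sqrt_nonneg _)]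
  exact slex_bound ht

/-- **The oscillating example `f(t) = sin(−log(1−t))`.**
`f` is continuously differentiable on `[0,1)`, `∫₀¹ |f'| √(1−t) dt` is finite and at most `2`,
and `f(t)` has no limit as `t → 1⁻`. -/
theorem sin_log_example :
    ContDiffOn ℝ 1 (fun t : ℝ => Real.sin (-Real.log (1 - t))) (Ico 0 1) ∧
    IntegrableOn
      (fun t => |deriv (fun s : ℝ => Real.sin (-Real.log (1 - s))) t| * Real.sqrt (1 - t))
      (Ico 0 1) ∧
    (∫ t in Ico (0:ℝ) 1,
        |deriv (fun s : ℝ => Real.sin (-Real.log (1 - s))) t| * Real.sqrt (1 - t)) ≤ 2 ∧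
    ¬ ∃ L : ℝ, Tendsto (fun t : ℝ => Real.sin (-Real.log (1 - t)))
        (nhdsWithin 1 (Iio 1)) (nhds L) := by
  refine ⟨?_, slex_integrable, ?_, ?_⟩
  · intro t ht
    have h1 : (0:ℝ) < 1 - t := by simpa using ht.2
    apply ContDiffAt.contDiffWithinAt
    have hinner : ContDiffAt ℝ 1 (fun s : ℝ => -Real.log (1 - s)) t := by
      apply ContDiffAt.neg
      exact (Real.contDiffAt_log.mpr h1.ne').comp t ((contDiff_const.sub contDiff_id).contDiffAt)
    exact Real.contDiff_sin.contDiffAt.comp t hinner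
  · calc (∫ t in Ico (0:ℝ) 1,
        |deriv (fun s : ℝ => Real.sin (-Real.log (1 - s))) t| * Real.sqrt (1 - t))
        ≤ ∫ t in Ico (0:ℝ) 1, (1 - t) ^ (-(1/2) : ℝ) := by
          apply setIntegral_mono_on slex_integrable slex_pow_integrableOn measurableSet_Ico
          exact fun t ht => slex_bound ht
      _ = 2 := slex_pow_integral
  · rintro ⟨L, hL⟩
    have h1 := slex_limit_eq L (π/2) hL
    have h2 := slex_limit_eq L (-(π/2)) hL
    rw [Real.sin_pi_div_two] at h1
    rw [Real.sin_neg, Real.sin_pi_div_two] at h2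
    linarith
end
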